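/- arXiv:1003.0394 — 3 statements merged into one kernel-verified Lean document; each statement's English description precedes it below -/
import Mathlib

section
/- Let $V$ be a real vector space and let $\mu_1, \dots, \mu_k \in V$ be linearly independent vectors, and let $L : V \to \mathbb{R}^q$ be a linear map. Suppose that whenever nonnegative coefficients $\beta_1, \dots, \beta_k \geq 0$ with $\beta_1 \neq 0$ and a partition of $\{1,\dots,k\}$ into two sets $I, J$ (with $1 \in I$) satisfy $L(\sum_{i \in I} \beta_i \mu_i) = L(\sum_{i \in J} \beta_i \mu_i)$, it follows that $\sum_{i \in I} \beta_i \mu_i = \sum_{i \in J} \beta_i \mu_i$. Then if additionally for each $i$ the element $\mu_i$ is not in the span of $\{\mu_j : j \neq i\}$ restricted to the nonnegative cone (i.e., no nontrivial nonnegative combination of the others equals a positive multiple of $\mu_i$), the vectors $L(\mu_1), \dots, L(\mu_k)$ are linearly independent. -/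
theorem stmt_5 (V : Type*) [AddCommGroup V] [Module ℝ V]
    (k q : ℕ) (μ : Fin k → V) (hμ : LinearIndependent ℝ μ)
    (L : V →ₗ[ℝ] (Fin q → ℝ))
    (hrigid : ∀ (β : Fin k → ℝ) (I J : Finset (Fin k)) (i₀ : Fin k),
      (∀ i, 0 ≤ β i) → β i₀ ≠ 0 → i₀ ∈ I → Disjoint I J → I ∪ J = Finset.univ →
      L (∑ i ∈ I, β i • μ i) = L (∑ i ∈ J, β i • μ i) →
      (∑ i ∈ I, β i • μ i) = ∑ i ∈ J, β i • μ i)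
    (hcone : ∀ i : Fin k, ¬ ∃ (β : Fin k → ℝ) (c : ℝ),
      (∀ j, 0 ≤ β j) ∧ 0 < c ∧ (∃ j, j ≠ i ∧ β j ≠ 0) ∧
      (∑ j ∈ Finset.univ.erase i, β j • μ j) = c • μ i) :
    LinearIndependent ℝ (fun i => L (μ i)) := by
  have hμ' := Fintype.linearIndependent_iff.mp hμ
  rw [Fintype.linearIndependent_iff]
  intro c hc i
  have key : ∀ d : Fin k → ℝ, (∑ j, d j • L (μ j)) = 0 →
      ∀ i₀, 0 < d i₀ → (∑ j, d j • μ j) = 0 := by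
    intro d hd i₀ hi₀
    set I : Finset (Fin k) := Finset.univ.filter (fun j => 0 ≤ d j) with hI
    set J : Finset (Fin k) := Finset.univ.filter (fun j => d j < 0) with hJ
    set β : Fin k → ℝ := fun j => |d j| with hβ
    have hdisj : Disjoint I J := by
      rw [Finset.disjoint_left]
      intro a ha hb
      rw [hI, Finset.mem_filter] at ha
      rw [hJ, Finset.mem_filter] at hb
      linarith [ha.2, hb.2]
    have hunion : I ∪ J = Finset.univ := by
      ext a
      simp only [hI, hJ, Finset.mem_union, Finset.mem_filter, Finset.mem_univ, true_and,
        iff_true]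
      exact le_or_gt 0 (d a)
    have hA : (∑ j ∈ I, β j • μ j) = ∑ j ∈ I, d j • μ j := by
      apply Finset.sum_congr rfl
      intro j hj
      rw [hI, Finset.mem_filter] at hj
      simp only [β, abs_of_nonneg hj.2]
    have hB : (∑ j ∈ J, β j • μ j) = -∑ j ∈ J, d j • μ j := by
      rw [← Finset.sum_neg_distrib]
      apply Finset.sum_congr rfl
      intro j hj
      rw [hJ, Finset.mem_filter] at hj
      simp only [β, abs_of_neg hj.2, neg_smul]
    have hsplit : (∑ j ∈ I, d j • μ j) + (∑ j ∈ J, d j • μ j) = ∑ j, d j • μ j := by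
      rw [← Finset.sum_union hdisj, hunion]
    have hdiff : (∑ j ∈ I, β j • μ j) - (∑ j ∈ J, β j • μ j) = ∑ j, d j • μ j := by
      rw [hA, hB, sub_neg_eq_add, hsplit]
    have hL : L (∑ j ∈ I, β j • μ j) = L (∑ j ∈ J, β j • μ j) := by
      have : L ((∑ j ∈ I, β j • μ j) - (∑ j ∈ J, β j • μ j)) = 0 := by
        rw [hdiff, map_sum]
        simpa [map_smul] using hd
      rw [map_sub, sub_eq_zero] at this
      exact this
    have heq := hrigid β I J i₀ (fun j => abs_nonneg _) (by positivity)
      (by rw [hI, Finset.mem_filter]; exact ⟨Finset.mem_univ _, le_of_lt hi₀⟩)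
      hdisj hunion hL
    rw [← hdiff, heq, sub_self]
  by_contra hci
  rcases lt_or_gt_of_ne hci with hneg | hpos
  · have hd : (∑ j, (-c) j • L (μ j)) = 0 := by
      simpa [neg_smul, Finset.sum_neg_distrib] using congrArg Neg.neg hc
    have h0 := key (-c) hd i (by simpa using hneg)
    have : (∑ j, c j • μ j) = 0 := by
      have := congrArg Neg.neg h0
      simpa [neg_smul, Finset.sum_neg_distrib] using this
    exact hci (hμ' c this i)
  · exact hci (hμ' c (key c hc i hpos) i)
end

section
/- Let $T$ be a finite tree with all vertices of degree $1$ or $3$ and at least one degree-$3$ vertex, with edges typed by $\{1,2,3\}$ so that the three edges at each degree-$3$ vertex have distinct types. Let $w_1, w_2, w_3$ be unit vectors in $\mathbb{R}^2$ with $w_1+w_2+w_3=0$. Suppose $f, g$ are maps from the vertices of $T$ to $\mathbb{R}^2$ such that for each edge of type $j$ joining vertices $u, v$, the difference $f(v) - f(u)$ (and likewise $g(v)-g(u)$) is a nonzero multiple of $w_j$. If $f$ and $g$ agree on all leaves of $T$, then $f = g$ on all vertices of $T$. -/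
theorem stmt_10 (V : Type*) [Fintype V] [DecidableEq V]
    (G : SimpleGraph V) [DecidableRel G.Adj] (htree : G.IsTree)
    (hdeg : ∀ v : V, G.degree v = 1 ∨ G.degree v = 3)
    (hbranch : ∃ v : V, G.degree v = 3)
    (τ : Sym2 V → Fin 3)
    (htype : ∀ v u u' : V, G.degree v = 3 → G.Adj v u → G.Adj v u' → u ≠ u' →
      τ s(v, u) ≠ τ s(v, u'))
    (w : Fin 3 → EuclideanSpace ℝ (Fin 2))
    (hunit : ∀ i, ‖w i‖ = 1) (hsum : w 0 + w 1 + w 2 = 0)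
    (f g : V → EuclideanSpace ℝ (Fin 2))
    (hf : ∀ u v : V, G.Adj u v → ∃ c : ℝ, c ≠ 0 ∧ f v - f u = c • w (τ s(u, v)))
    (hg : ∀ u v : V, G.Adj u v → ∃ c : ℝ, c ≠ 0 ∧ g v - g u = c • w (τ s(u, v)))
    (hleaf : ∀ v : V, G.degree v = 1 → f v = g v) :
    f = g := by
  classical
  have hNe : Nonempty V := ⟨hbranch.choose⟩
  -- pairwise inner products are -1/2
  have hww : ∀ i j : Fin 3, i ≠ j → (inner ℝ (w i) (w j) : ℝ) = -(1/2) := by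
    have key : ∀ i j k : Fin 3, w i + w j = - w k → (inner ℝ (w i) (w j) : ℝ) = -(1/2) := by
      intro i j k hijk
      have h1 : ‖w i + w j‖ = 1 := by rw [hijk, norm_neg, hunit]
      have h2 := norm_add_sq_real (w i) (w j)
      rw [h1, hunit, hunit] at h2
      nlinarith [h2]
    have h01 : w 0 + w 1 = - w 2 := by rw [eq_neg_iff_add_eq_zero, ← hsum]
    have h10 : w 1 + w 0 = - w 2 := by rw [eq_neg_iff_add_eq_zero, ← hsum]; abel
    have h02 : w 0 + w 2 = - w 1 := by rw [eq_neg_iff_add_eq_zero, ← hsum]; abel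
    have h20 : w 2 + w 0 = - w 1 := by rw [eq_neg_iff_add_eq_zero, ← hsum]; abel
    have h12 : w 1 + w 2 = - w 0 := by rw [eq_neg_iff_add_eq_zero, ← hsum]; abel
    have h21 : w 2 + w 1 = - w 0 := by rw [eq_neg_iff_add_eq_zero, ← hsum]; abel
    intro i j hij
    fin_cases i <;> fin_cases j
    · exact absurd rfl hij
    · exact key 0 1 2 h01
    · exact key 0 2 1 h02
    · exact key 1 0 2 h10
    · exact absurd rfl hij
    · exact key 1 2 0 h12
    · exact key 2 0 1 h20
    · exact key 2 1 0 h21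
    · exact absurd rfl hij
  have hii : ∀ i : Fin 3, (inner ℝ (w i) (w i) : ℝ) = 1 := by
    intro i
    rw [real_inner_self_eq_norm_mul_norm, hunit, mul_one]
  -- pairwise linear independence
  have hindep : ∀ i j : Fin 3, i ≠ j → ∀ a b : ℝ, a • w i + b • w j = 0 →
      a = 0 ∧ b = 0 := by
    intro i j hij a b hab
    have h1 := congrArg (fun x => (inner ℝ (x) (w i) : ℝ)) hab
    have h2 := congrArg (fun x => (inner ℝ (x) (w j) : ℝ)) hab
    simp only [inner_add_left, real_inner_smul_left, inner_zero_left] at h1 h2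
    rw [hii i, hww j i (Ne.symm hij)] at h1
    rw [hww i j hij, hii j] at h2
    constructor <;> linarith
  -- the difference function satisfies an edge relation
  have hedge : ∀ u v : V, G.Adj u v →
      ∃ c : ℝ, (f v - g v) - (f u - g u) = c • w (τ s(u, v)) := by
    intro u v huv
    obtain ⟨c, _, hc⟩ := hf u v huv
    obtain ⟨c', _, hc'⟩ := hg u v huv
    refine ⟨c - c', ?_⟩
    rw [sub_smul, ← hc, ← hc']
    abel
  -- existence of a leaf
  have hleafex : ∃ r : V, G.degree r = 1 := by
    by_contra hno
    push_neg at hno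
    have h3 : ∀ v, G.degree v = 3 := fun v => (hdeg v).resolve_left (hno v)
    have hhs := G.sum_degrees_eq_twice_card_edges
    have hcard := htree.card_edgeFinset
    have hpos : 1 ≤ Fintype.card V := Fintype.card_pos
    simp only [h3, Finset.sum_const, Finset.card_univ, smul_eq_mul] at hhs
    omega
  obtain ⟨r, hr⟩ := hleafex
  -- at most one neighbor is at distance ≤ d from the root
  have huniq : ∀ v u1 u2 : V, G.Adj v u1 → G.Adj v u2 →
      G.dist r u1 ≤ G.dist r v → G.dist r u2 ≤ G.dist r v → u1 = u2 := by
    intro v u1 u2 ha1 ha2 hd1 hd2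
    have key : ∀ u : V, G.Adj v u → G.dist r u ≤ G.dist r v →
        ∃ p : G.Walk r u, p.IsPath ∧ v ∉ p.support := by
      intro u hadj hdu
      obtain ⟨p, hp, hl⟩ :=
        (htree.isConnected.preconnected r u).exists_path_of_dist
      refine ⟨p, hp, fun hv => ?_⟩
      have h1 : G.dist r v ≤ (p.takeUntil v hv).length := SimpleGraph.dist_le _
      have h2 : (p.takeUntil v hv).length + (p.dropUntil v hv).length
          = p.length := by
        rw [← SimpleGraph.Walk.length_append, SimpleGraph.Walk.take_spec]
      have h3 : (p.dropUntil v hv).length ≠ 0 := fun h0 =>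
        G.ne_of_adj hadj (SimpleGraph.Walk.eq_of_length_eq_zero h0)
      omega
    obtain ⟨p1, hp1, hv1⟩ := key u1 ha1 hd1
    obtain ⟨p2, hp2, hv2⟩ := key u2 ha2 hd2
    have hq1 : (p1.concat ha1.symm).IsPath := by
      rw [← SimpleGraph.Walk.isPath_reverse_iff, SimpleGraph.Walk.reverse_concat]
      exact SimpleGraph.Walk.IsPath.cons hp1.reverse
        (by simpa [SimpleGraph.Walk.support_reverse] using hv1)
    have hq2 : (p2.concat ha2.symm).IsPath := by
      rw [← SimpleGraph.Walk.isPath_reverse_iff, SimpleGraph.Walk.reverse_concat]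
      exact SimpleGraph.Walk.IsPath.cons hp2.reverse
        (by simpa [SimpleGraph.Walk.support_reverse] using hv2)
    obtain ⟨q, -, hq⟩ := htree.existsUnique_path r v
    have heq : p1.concat ha1.symm = p2.concat ha2.symm := by
      rw [hq _ hq1, hq _ hq2]
    have heq' : SimpleGraph.Walk.cons ha1 p1.reverse
        = SimpleGraph.Walk.cons ha2 p2.reverse := by
      have := congrArg SimpleGraph.Walk.reverse heq
      rwa [SimpleGraph.Walk.reverse_concat, SimpleGraph.Walk.reverse_concat] at this
    injection heq'
  have hcard1 : ∀ v : V,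
      ((G.neighborFinset v).filter (fun u => G.dist r u ≤ G.dist r v)).card ≤ 1 := by
    intro v
    apply Finset.card_le_one.mpr
    intro a ha b hb
    simp only [Finset.mem_filter, SimpleGraph.mem_neighborFinset] at ha hb
    exact huniq v a b ha.1 hb.1 ha.2 hb.2
  have hdistlt : ∀ v : V, G.dist r v < Fintype.card V := by
    intro v
    obtain ⟨p, hp, hl⟩ := (htree.isConnected.preconnected r v).exists_path_of_dist
    rw [← hl]
    exact hp.length_lt
  -- main downward induction
  have main : ∀ n : ℕ, ∀ v : V, Fintype.card V - G.dist r v ≤ n → f v = g v := by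
    intro n
    induction n with
    | zero =>
      intro v hv
      exact absurd hv (by have := hdistlt v; omega)
    | succ n ih =>
      intro v hv
      rcases hdeg v with h1 | h3
      · exact hleaf v h1
      · -- at least two neighbors are farther from the root
        have hsplit := Finset.card_filter_add_card_filter_not
          (s := G.neighborFinset v) (p := fun u => G.dist r u ≤ G.dist r v)
        have hdegcard : (G.neighborFinset v).card = 3 := by
          rw [G.card_neighborFinset_eq_degree]; exact h3
        have h2lt : 1 <
            ((G.neighborFinset v).filter
              (fun u => ¬ G.dist r u ≤ G.dist r v)).card := by
          have := hcard1 v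
          omega
        obtain ⟨u1, hu1, u2, hu2, hne⟩ := Finset.one_lt_card.mp h2lt
        simp only [Finset.mem_filter, SimpleGraph.mem_neighborFinset,
          not_le] at hu1 hu2
        have e1 : f u1 = g u1 := ih u1 (by have := hdistlt v; omega)
        have e2 : f u2 = g u2 := ih u2 (by have := hdistlt v; omega)
        obtain ⟨c1, hc1⟩ := hedge u1 v hu1.1.symm
        obtain ⟨c2, hc2⟩ := hedge u2 v hu2.1.symm
        rw [e1, sub_self, sub_zero] at hc1
        rw [e2, sub_self, sub_zero] at hc2
        have ht : τ s(u1, v) ≠ τ s(u2, v) := by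
          rw [Sym2.eq_swap (a := u1), Sym2.eq_swap (a := u2)]
          exact htype v u1 u2 h3 hu1.1 hu2.1 hne
        have hz : c1 • w (τ s(u1, v)) + (-c2) • w (τ s(u2, v)) = 0 := by
          rw [neg_smul, ← hc1, ← hc2]
          abel
        obtain ⟨hz1, hz2⟩ := hindep _ _ ht c1 (-c2) hz
        rw [hz1, zero_smul] at hc1
        rw [sub_eq_zero] at hc1
        exact hc1
  funext v
  exact main (Fintype.card V) v (Nat.sub_le _ _)
end

section
/- Let $w_1, w_2, w_3$ be unit vectors in $\mathbb{R}^2$ with $w_1+w_2+w_3=0$, and fix $j \neq j'$ in $\{1,2,3\}$. For points $P, Q \in \mathbb{R}^2$, the intersection point $X(P,Q)$ of the lines $P + \mathbb{R} w_j$ and $Q + \mathbb{R} w_{j'}$ satisfies $\|X(P,Q) - X(P',Q')\| \le 2(\|P-P'\| + \|Q-Q'\|)$ for all $P, P', Q, Q'$. -/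
private lemma three_inner {E : Type*} [NormedAddCommGroup E] [InnerProductSpace ℝ E]
    (a b c : E) (ha : ‖a‖ = 1) (hb : ‖b‖ = 1) (hc : ‖c‖ = 1)
    (h : a + b + c = 0) : inner ℝ a b = (-1/2 : ℝ) := by
  have hc' : c = -(a + b) := by
    have h2 : (a + b) + c = 0 := h
    exact eq_neg_of_add_eq_zero_right h2
  have h1 : ‖a + b‖ ^ 2 = 1 := by
    rw [← norm_neg (a + b), ← hc', hc]; norm_num
  rw [norm_add_sq_real, ha, hb] at h1
  linarith

private lemma aux_main {E : Type*} [NormedAddCommGroup E] [InnerProductSpace ℝ E]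
    (w w' A B D : E) (t s : ℝ) (hw : ‖w‖ = 1) (hw' : ‖w'‖ = 1)
    (hww' : inner ℝ w w' = (-1/2 : ℝ))
    (hD1 : D = A + t • w) (hD2 : D = B + s • w') :
    ‖D‖ ≤ 2 * (‖A‖ + ‖B‖) := by
  have hAB : A - B = s • w' - t • w := by
    have h := hD1.symm.trans hD2
    have h2 : A = (B + s • w') - t • w := eq_sub_of_add_eq h
    rw [h2]; abel
  have hiww : inner ℝ (s • w') (t • w) = (-(s * t) / 2 : ℝ) := by
    have h3 : (inner ℝ w' w : ℝ) = inner ℝ w w' := real_inner_comm w w'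
    rw [real_inner_smul_left, real_inner_smul_right, h3, hww']
    ring
  have hm : ‖A - B‖ ^ 2 = s ^ 2 + t ^ 2 + s * t := by
    rw [hAB, norm_sub_sq_real, hiww, norm_smul, norm_smul, hw, hw']
    simp only [Real.norm_eq_abs, mul_one]
    nlinarith [sq_abs s, sq_abs t]
  have hmle : ‖A - B‖ ≤ ‖A‖ + ‖B‖ := norm_sub_le A B
  have hts : |t| + |s| ≤ 2 * ‖A - B‖ := by
    nlinarith [sq_nonneg (|t| - |s|), abs_mul t s, neg_abs_le (t * s),
      abs_nonneg t, abs_nonneg s, norm_nonneg (A - B), sq_abs t, sq_abs s]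
  have h1 : ‖D‖ ≤ ‖A‖ + |t| := by
    rw [hD1]
    calc ‖A + t • w‖ ≤ ‖A‖ + ‖t • w‖ := norm_add_le _ _
      _ = ‖A‖ + |t| := by rw [norm_smul, hw, Real.norm_eq_abs, mul_one]
  have h2 : ‖D‖ ≤ ‖B‖ + |s| := by
    rw [hD2]
    calc ‖B + s • w'‖ ≤ ‖B‖ + ‖s • w'‖ := norm_add_le _ _
      _ = ‖B‖ + |s| := by rw [norm_smul, hw', Real.norm_eq_abs, mul_one]
  have hA := norm_nonneg A
  have hB := norm_nonneg B
  linarith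

theorem stmt_11 (w : Fin 3 → EuclideanSpace ℝ (Fin 2))
    (hunit : ∀ i, ‖w i‖ = 1) (hsum : w 0 + w 1 + w 2 = 0)
    (j j' : Fin 3) (hjj : j ≠ j')
    (P P' Q Q' X X' : EuclideanSpace ℝ (Fin 2))
    (hX : (∃ t : ℝ, X = P + t • w j) ∧ (∃ t : ℝ, X = Q + t • w j'))
    (hX' : (∃ t : ℝ, X' = P' + t • w j) ∧ (∃ t : ℝ, X' = Q' + t • w j')) :
    ‖X - X'‖ ≤ 2 * (‖P - P'‖ + ‖Q - Q'‖) := by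
  have hin : inner ℝ (w j) (w j') = (-1/2 : ℝ) := by
    fin_cases j <;> fin_cases j'
    · exact absurd rfl hjj
    · exact three_inner _ _ _ (hunit 0) (hunit 1) (hunit 2) hsum
    · exact three_inner _ _ _ (hunit 0) (hunit 2) (hunit 1) (by rw [← hsum]; simp only [Fin.isValue, Fin.mk_zero, Fin.mk_one]; abel_nf; try ac_rfl)
    · exact three_inner _ _ _ (hunit 1) (hunit 0) (hunit 2) (by rw [← hsum]; simp only [Fin.isValue, Fin.mk_zero, Fin.mk_one]; abel_nf; try ac_rfl)
    · exact absurd rfl hjj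
    · exact three_inner _ _ _ (hunit 1) (hunit 2) (hunit 0) (by rw [← hsum]; simp only [Fin.isValue, Fin.mk_zero, Fin.mk_one]; abel_nf; try ac_rfl)
    · exact three_inner _ _ _ (hunit 2) (hunit 0) (hunit 1) (by rw [← hsum]; simp only [Fin.isValue, Fin.mk_zero, Fin.mk_one]; abel_nf; try ac_rfl)
    · exact three_inner _ _ _ (hunit 2) (hunit 1) (hunit 0) (by rw [← hsum]; simp only [Fin.isValue, Fin.mk_zero, Fin.mk_one]; abel_nf; try ac_rfl)
    · exact absurd rfl hjj
  obtain ⟨⟨t1, ht1⟩, ⟨t2, ht2⟩⟩ := hX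
  obtain ⟨⟨t1', ht1'⟩, ⟨t2', ht2'⟩⟩ := hX'
  have hD1 : X - X' = (P - P') + (t1 - t1') • w j := by
    rw [ht1, ht1', sub_smul]; abel
  have hD2 : X - X' = (Q - Q') + (t2 - t2') • w j' := by
    rw [ht2, ht2', sub_smul]; abel
  exact aux_main (w j) (w j') (P - P') (Q - Q') (X - X') (t1 - t1') (t2 - t2')
    (hunit j) (hunit j') hin hD1 hD2
end
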